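/- Degree-shift lemma, part (ii): Let g₁ be a single real polynomial and h = (h₁,...,h_s) a tuple of polynomials such that each h_i ∈ Q(g₁)_{deg h_i + ℓ}. Then for every d, the truncated preordering T(h)_d is contained in Q(g₁)_{d + sℓ}. -/

import Mathlib

open MvPolynomial

/-- The truncated quadratic module `Q(g₁)_r` generated by a single polynomial `g₁`. -/
def QModSingle {n : ℕ} (g₁ : MvPolynomial (Fin n) ℝ) (r : ℕ) :
    Set (MvPolynomial (Fin n) ℝ) :=
  {p | ∃ σ₀ σ₁ : MvPolynomial (Fin n) ℝ,
    IsSumSq σ₀ ∧ σ₀.totalDegree ≤ r ∧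
    IsSumSq σ₁ ∧ (σ₁ * g₁).totalDegree ≤ r ∧
    p = σ₀ + σ₁ * g₁}

/-- The truncated preordering `T(h)_r` generated by the tuple `h`. -/
def TPreord {n s : ℕ} (h : Fin s → MvPolynomial (Fin n) ℝ) (r : ℕ) :
    Set (MvPolynomial (Fin n) ℝ) :=
  {p | ∃ σ : Finset (Fin s) → MvPolynomial (Fin n) ℝ,
    (∀ I, IsSumSq (σ I)) ∧ (∀ I, (σ I * ∏ i ∈ I, h i).totalDegree ≤ r) ∧
    p = ∑ I : Finset (Fin s), σ I * ∏ i ∈ I, h i}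

/-! ### Auxiliary facts about sums of squares -/

private lemma mySq_mul {R : Type*} [CommRing R] {S : R} (a : R) (hS : IsSumSq S) :
    IsSumSq (a * a * S) := by
  induction hS with
  | zero => simpa using IsSumSq.zero
  | @sq_add b T hT ih =>
      have : a * a * (b * b + T) = (a * b) * (a * b) + a * a * T := by ring
      rw [this]
      exact IsSumSq.sq_add _ ih

private lemma mySos_mul {R : Type*} [CommRing R] {S T : R} (hS : IsSumSq S) (hT : IsSumSq T) :
    IsSumSq (S * T) := by
  induction hS with
  | zero => simpa using IsSumSq.zero
  | @sq_add a U hU ih =>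
      have : (a * a + U) * T = a * a * T + U * T := by ring
      rw [this]
      exact (mySq_mul a hT).add ih

private lemma mySq (R : Type*) [CommRing R] (a : R) : IsSumSq (a * a) := by
  simpa using IsSumSq.sq_add a IsSumSq.zero

/-! ### Total degree of a product over a domain -/

private lemma myDegree_add {n : ℕ} (a b : Fin n →₀ ℕ) :
    (a + b).degree = a.degree + b.degree := by
  simp only [Finsupp.degree_eq_weight_one]
  exact map_add _ a b

private lemma myDegree_eq_sum {n : ℕ} (d : Fin n →₀ ℕ) :
    d.degree = d.sum fun _ e => e := rfl

private lemma myCoeff_zero_of_lt {n : ℕ} {p : MvPolynomial (Fin n) ℝ} {d : Fin n →₀ ℕ}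
    (h : p.totalDegree < d.degree) : coeff d p = 0 :=
  coeff_eq_zero_of_totalDegree_lt h

private lemma myHC_top_ne_zero {n : ℕ} {p : MvPolynomial (Fin n) ℝ} (hp : p ≠ 0) :
    homogeneousComponent p.totalDegree p ≠ 0 := by
  obtain ⟨d, hd, hdeg⟩ := Finset.exists_mem_eq_sup p.support (support_nonempty.mpr hp)
    (fun m => m.sum fun _ e => e)
  have hdd : d.degree = p.totalDegree := by
    rw [myDegree_eq_sum, totalDegree, hdeg]
  intro h
  have hc := coeff_homogeneousComponent (σ := Fin n) p.totalDegree p d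
  rw [h, coeff_zero, if_pos hdd] at hc
  exact (mem_support_iff.mp hd) hc.symm

private lemma myHC_mul_top {n : ℕ} (p q : MvPolynomial (Fin n) ℝ) :
    homogeneousComponent (p.totalDegree + q.totalDegree) (p * q)
      = homogeneousComponent p.totalDegree p * homogeneousComponent q.totalDegree q := by
  classical
  ext d
  rw [coeff_homogeneousComponent, coeff_mul, coeff_mul]
  by_cases hd : d.degree = p.totalDegree + q.totalDegree
  · rw [if_pos hd]
    refine Finset.sum_congr rfl ?_
    intro x hx
    rw [Finset.HasAntidiagonal.mem_antidiagonal] at hx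
    have hsum : x.1.degree + x.2.degree = p.totalDegree + q.totalDegree := by
      rw [← myDegree_add, hx, hd]
    rw [coeff_homogeneousComponent, coeff_homogeneousComponent]
    by_cases h1 : x.1.degree = p.totalDegree
    · have h2 : x.2.degree = q.totalDegree := by omega
      rw [if_pos h1, if_pos h2]
    · rcases lt_or_gt_of_ne h1 with hlt | hgt
      · have h2lt : q.totalDegree < x.2.degree := by
          by_contra hcon
          push_neg at hcon
          have hle1 : x.1.degree ≤ p.totalDegree := le_of_lt hlt
          omega
        have hz : coeff x.2 q = 0 := myCoeff_zero_of_lt h2lt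
        rw [hz, if_neg h1, mul_zero, zero_mul]
      · have hz : coeff x.1 p = 0 := myCoeff_zero_of_lt hgt
        rw [hz, if_neg h1, zero_mul, zero_mul]
  · rw [if_neg hd]
    symm
    refine Finset.sum_eq_zero ?_
    intro x hx
    rw [Finset.HasAntidiagonal.mem_antidiagonal] at hx
    rw [coeff_homogeneousComponent, coeff_homogeneousComponent]
    by_cases h1 : x.1.degree = p.totalDegree
    · have h2 : x.2.degree ≠ q.totalDegree := by
        intro h2
        exact hd (by rw [← hx, myDegree_add, h1, h2])
      rw [if_neg h2, mul_zero]
    · rw [if_neg h1, zero_mul]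

private lemma myTDeg_mul_eq {n : ℕ} {p q : MvPolynomial (Fin n) ℝ} (hp : p ≠ 0) (hq : q ≠ 0) :
    (p * q).totalDegree = p.totalDegree + q.totalDegree := by
  refine le_antisymm (totalDegree_mul p q) ?_
  by_contra hlt
  push_neg at hlt
  have h0 : homogeneousComponent (p.totalDegree + q.totalDegree) (p * q) = 0 :=
    homogeneousComponent_eq_zero _ _ hlt
  rw [myHC_mul_top] at h0
  exact mul_ne_zero (myHC_top_ne_zero hp) (myHC_top_ne_zero hq) h0

/-! ### Basic closure properties of `QModSingle` -/

private lemma myQ_mono {n : ℕ} {g₁ : MvPolynomial (Fin n) ℝ} {a b : ℕ} (hab : a ≤ b) :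
    QModSingle g₁ a ⊆ QModSingle g₁ b := by
  rintro p ⟨σ₀, σ₁, h0, h0d, h1, h1d, rfl⟩
  exact ⟨σ₀, σ₁, h0, h0d.trans hab, h1, h1d.trans hab, rfl⟩

private lemma myQ_sos {n : ℕ} {g₁ σ : MvPolynomial (Fin n) ℝ} {r : ℕ} (hs : IsSumSq σ)
    (hd : σ.totalDegree ≤ r) : σ ∈ QModSingle g₁ r :=
  ⟨σ, 0, hs, hd, IsSumSq.zero, by simp, by simp⟩

private lemma myQ_zero {n : ℕ} {g₁ : MvPolynomial (Fin n) ℝ} {r : ℕ} :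
    (0 : MvPolynomial (Fin n) ℝ) ∈ QModSingle g₁ r :=
  myQ_sos IsSumSq.zero (by simp)

private lemma myQ_add {n : ℕ} {g₁ : MvPolynomial (Fin n) ℝ} {r : ℕ}
    {p q : MvPolynomial (Fin n) ℝ} (hp : p ∈ QModSingle g₁ r) (hq : q ∈ QModSingle g₁ r) :
    p + q ∈ QModSingle g₁ r := by
  obtain ⟨σ₀, σ₁, h0, h0d, h1, h1d, rfl⟩ := hp
  obtain ⟨τ₀, τ₁, k0, k0d, k1, k1d, rfl⟩ := hq
  refine ⟨σ₀ + τ₀, σ₁ + τ₁, h0.add k0,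
    (totalDegree_add _ _).trans (max_le h0d k0d), h1.add k1, ?_, by ring⟩
  rw [add_mul]
  exact (totalDegree_add _ _).trans (max_le h1d k1d)

private lemma myQ_mul {n : ℕ} {g₁ : MvPolynomial (Fin n) ℝ} {a b : ℕ}
    {p q : MvPolynomial (Fin n) ℝ} (hp : p ∈ QModSingle g₁ a) (hq : q ∈ QModSingle g₁ b) :
    p * q ∈ QModSingle g₁ (a + b) := by
  obtain ⟨σ₀, σ₁, h0, h0d, h1, h1d, rfl⟩ := hp
  obtain ⟨τ₀, τ₁, k0, k0d, k1, k1d, rfl⟩ := hq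
  refine ⟨σ₀ * τ₀ + σ₁ * τ₁ * (g₁ * g₁), σ₀ * τ₁ + σ₁ * τ₀, ?_, ?_, ?_, ?_, by ring⟩
  · exact (mySos_mul h0 k0).add (mySos_mul (mySos_mul h1 k1) (mySq _ g₁))
  · refine (totalDegree_add _ _).trans (max_le ?_ ?_)
    · exact (totalDegree_mul _ _).trans (add_le_add h0d k0d)
    · have hrw : σ₁ * τ₁ * (g₁ * g₁) = (σ₁ * g₁) * (τ₁ * g₁) := by ring
      rw [hrw]
      exact (totalDegree_mul _ _).trans (add_le_add h1d k1d)
  · exact (mySos_mul h0 k1).add (mySos_mul h1 k0)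
  · have hrw : (σ₀ * τ₁ + σ₁ * τ₀) * g₁ = σ₀ * (τ₁ * g₁) + (σ₁ * g₁) * τ₀ := by ring
    rw [hrw]
    refine (totalDegree_add _ _).trans (max_le ?_ ?_)
    · exact (totalDegree_mul _ _).trans (add_le_add h0d k1d)
    · exact (totalDegree_mul _ _).trans (add_le_add h1d k0d)

private lemma myQ_sum {n : ℕ} {g₁ : MvPolynomial (Fin n) ℝ} {r : ℕ} {ι : Type*}
    (t : Finset ι) (f : ι → MvPolynomial (Fin n) ℝ)
    (hf : ∀ i ∈ t, f i ∈ QModSingle g₁ r) : (∑ i ∈ t, f i) ∈ QModSingle g₁ r := by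
  classical
  induction t using Finset.induction_on with
  | empty => simpa using myQ_zero
  | insert a t hnot ih =>
      rw [Finset.sum_insert hnot]
      exact myQ_add (hf a (Finset.mem_insert_self a t))
        (ih fun i hi => hf i (Finset.mem_insert_of_mem hi))

/-! ### Products of the generators -/

private lemma myProd_mem {n s : ℕ} {g₁ : MvPolynomial (Fin n) ℝ}
    {h : Fin s → MvPolynomial (Fin n) ℝ} {ℓ : ℕ}
    (hshift : ∀ i, h i ∈ QModSingle g₁ ((h i).totalDegree + ℓ)) (I : Finset (Fin s))
    (hI : ∀ i ∈ I, h i ≠ 0) :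
    (∏ i ∈ I, h i) ∈ QModSingle g₁ ((∏ i ∈ I, h i).totalDegree + I.card * ℓ) := by
  classical
  induction I using Finset.induction_on with
  | empty =>
      simp only [Finset.prod_empty, Finset.card_empty, zero_mul, totalDegree_one, add_zero]
      exact myQ_sos (by simpa using mySq _ (1 : MvPolynomial (Fin n) ℝ)) (by simp)
  | insert a I hnot ih =>
      have ha : h a ≠ 0 := hI a (Finset.mem_insert_self a I)
      have hIne : ∀ i ∈ I, h i ≠ 0 := fun i hi => hI i (Finset.mem_insert_of_mem hi)
      have hPne : (∏ i ∈ I, h i) ≠ 0 := Finset.prod_ne_zero_iff.mpr hIne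
      rw [Finset.prod_insert hnot]
      have hmem := myQ_mul (hshift a) (ih hIne)
      have hdeq : (h a * ∏ i ∈ I, h i).totalDegree
          = (h a).totalDegree + (∏ i ∈ I, h i).totalDegree := myTDeg_mul_eq ha hPne
      have hcard : (insert a I).card = I.card + 1 := Finset.card_insert_of_notMem hnot
      have hnum : (h a).totalDegree + ℓ + ((∏ i ∈ I, h i).totalDegree + I.card * ℓ)
          = (h a * ∏ i ∈ I, h i).totalDegree + (insert a I).card * ℓ := by
        rw [hdeq, hcard]; ring
      rw [hnum] at hmem
      exact hmem

theorem stmt_7 {n s : ℕ} (g₁ : MvPolynomial (Fin n) ℝ)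
    (h : Fin s → MvPolynomial (Fin n) ℝ) (ℓ : ℕ)
    (hshift : ∀ i, h i ∈ QModSingle g₁ ((h i).totalDegree + ℓ)) (d : ℕ) :
    TPreord h d ⊆ QModSingle g₁ (d + s * ℓ) := by
  rintro p ⟨σ, hsos, hdeg, rfl⟩
  refine myQ_sum _ _ ?_
  intro I _
  by_cases hz : σ I * ∏ i ∈ I, h i = 0
  · rw [hz]; exact myQ_zero
  · have hσ : σ I ≠ 0 := left_ne_zero_of_mul hz
    have hP : (∏ i ∈ I, h i) ≠ 0 := right_ne_zero_of_mul hz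
    have hIne : ∀ i ∈ I, h i ≠ 0 := Finset.prod_ne_zero_iff.mp hP
    have hdeq : (σ I).totalDegree + (∏ i ∈ I, h i).totalDegree ≤ d := by
      rw [← myTDeg_mul_eq hσ hP]; exact hdeg I
    have hmem := myQ_mul (myQ_sos (g₁ := g₁) (hsos I) le_rfl)
      (myProd_mem hshift I hIne)
    refine myQ_mono ?_ hmem
    have hcard : I.card ≤ s := by
      simpa using Finset.card_le_univ I
    calc (σ I).totalDegree + ((∏ i ∈ I, h i).totalDegree + I.card * ℓ)
        = ((σ I).totalDegree + (∏ i ∈ I, h i).totalDegree) + I.card * ℓ := by ring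
      _ ≤ d + s * ℓ := add_le_add hdeq (Nat.mul_le_mul_right ℓ hcard)
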